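/- Let E be a finite-dimensional real inner product space, M ⊆ E a nonzero subspace, and R a norm on E decomposable with respect to (M, M⊥). Let R*(v) = sup_{R(u) ≤ 1} ⟨u, v⟩ be its dual norm and Ψ = sup{ R(u)/‖u‖ : u ∈ M, u ≠ 0 } the subspace compatibility constant. Let θ* ∈ M, let θ̂_n ∈ E, let λ > 0 satisfy λ ≥ R*(θ̂_n − θ*), and let θ̂ be a minimizer of R over the set { θ ∈ E : R*(θ − θ̂_n) ≤ λ }. Then: (i) R*(θ̂ − θ*) ≤ 2λ; (ii) ‖θ̂ − θ*‖ ≤ 4λΨ; (iii) R(θ̂ − θ*) ≤ 8λΨ². -/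

import Mathlib

open scoped RealInnerProductSpace

/-- A function `R : E → ℝ` is a norm: absolutely homogeneous, subadditive, nonnegative,
and definite. -/
def IsNormOn {E : Type*} [NormedAddCommGroup E] [InnerProductSpace ℝ E]
    (R : E → ℝ) : Prop :=
  (∀ (a : ℝ) (x : E), R (a • x) = |a| * R x) ∧
  (∀ x y : E, R (x + y) ≤ R x + R y) ∧
  (∀ x : E, 0 ≤ R x) ∧
  (∀ x : E, R x = 0 → x = 0)

/-- Error bounds for the elementary estimator: if `R` is a norm decomposable w.r.t. the
nonzero subspace `M` and its orthogonal complement, `R*` is its dual norm, `Ψ` the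
subspace compatibility constant of `M`, `θ* ∈ M`, `λ ≥ R*(θ̂_n − θ*)`, and `θ̂` minimizes
`R` over `{θ : R*(θ − θ̂_n) ≤ λ}`, then
(i) `R*(θ̂ − θ*) ≤ 2λ`, (ii) `‖θ̂ − θ*‖ ≤ 4λΨ`, (iii) `R(θ̂ − θ*) ≤ 8λΨ²`. -/
theorem stmt7 {E : Type*} [NormedAddCommGroup E] [InnerProductSpace ℝ E]
    [FiniteDimensional ℝ E]
    (M : Submodule ℝ E) (hM : M ≠ ⊥)
    (R : E → ℝ) (hR : IsNormOn R)
    (hdecomp : ∀ u ∈ M, ∀ v ∈ Mᗮ, R (u + v) = R u + R v)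
    (Rstar : E → ℝ)
    (hRstar : ∀ v : E, Rstar v = sSup {r : ℝ | ∃ u : E, R u ≤ 1 ∧ r = ⟪u, v⟫})
    (Ψ : ℝ) (hΨ : Ψ = sSup {r : ℝ | ∃ u : E, u ∈ M ∧ u ≠ 0 ∧ r = R u / ‖u‖})
    (θstar : E) (hθstar : θstar ∈ M)
    (θn : E) (lam : ℝ) (hlam : 0 < lam) (hlam2 : Rstar (θn - θstar) ≤ lam)
    (θhat : E) (hfeas : Rstar (θhat - θn) ≤ lam)
    (hmin : ∀ θ : E, Rstar (θ - θn) ≤ lam → R θhat ≤ R θ) :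
    Rstar (θhat - θstar) ≤ 2 * lam ∧
    ‖θhat - θstar‖ ≤ 4 * lam * Ψ ∧
    R (θhat - θstar) ≤ 8 * lam * Ψ ^ 2 := by
  classical
  obtain ⟨hhom, hadd, hnonneg, hdef⟩ := hR
  have hR0 : R 0 = 0 := by simpa using hhom 0 0
  have hRneg : ∀ x : E, R (-x) = R x := fun x => by simpa using hhom (-1) x
  have hRpos : ∀ x : E, x ≠ 0 → 0 < R x := fun x hx =>
    lt_of_le_of_ne (hnonneg x) fun h => hx (hdef x h.symm)
  -- upper bound R ≤ C‖·‖
  obtain ⟨C, hC0, hCub⟩ : ∃ C : ℝ, 0 ≤ C ∧ ∀ x : E, R x ≤ C * ‖x‖ := by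
    set b := Module.finBasis ℝ E with hb
    refine ⟨∑ i, ‖LinearMap.toContinuousLinearMap (b.coord i)‖ * R (b i), ?_, ?_⟩
    · exact Finset.sum_nonneg fun i _ => mul_nonneg (norm_nonneg _) (hnonneg _)
    · intro x
      calc R x = R (∑ i, b.repr x i • b i) := by rw [Module.Basis.sum_repr]
        _ ≤ ∑ i, R (b.repr x i • b i) :=
            Finset.le_sum_of_subadditive R hR0.le hadd _ _
        _ = ∑ i, |b.repr x i| * R (b i) := by simp [hhom]
        _ ≤ ∑ i, (‖LinearMap.toContinuousLinearMap (b.coord i)‖ * ‖x‖) * R (b i) := by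
            refine Finset.sum_le_sum fun i _ => ?_
            refine mul_le_mul_of_nonneg_right ?_ (hnonneg _)
            have h := (LinearMap.toContinuousLinearMap (b.coord i)).le_opNorm x
            simpa [Real.norm_eq_abs, Module.Basis.coord_apply] using h
        _ = (∑ i, ‖LinearMap.toContinuousLinearMap (b.coord i)‖ * R (b i)) * ‖x‖ := by
            rw [Finset.sum_mul]; congr 1; ext i; ring
  have hlip : ∀ x y : E, R x - R y ≤ C * ‖x - y‖ := by
    intro x y
    have h1 : R x ≤ R (x - y) + R y := by simpa using hadd (x - y) y
    have := hCub (x - y)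
    linarith
  have hcont : Continuous R := by
    have : LipschitzWith (Real.toNNReal C) R := by
      refine LipschitzWith.of_dist_le_mul fun x y => ?_
      rw [Real.dist_eq, dist_eq_norm, Real.coe_toNNReal C hC0, abs_sub_le_iff]
      refine ⟨hlip x y, ?_⟩
      have := hlip y x
      rwa [norm_sub_rev] at this
    exact this.continuous
  -- nontriviality
  obtain ⟨x₀, hx₀M, hx₀⟩ := Submodule.ne_bot_iff M |>.mp hM
  have : Nontrivial E := ⟨⟨x₀, 0, hx₀⟩⟩
  -- lower bound c‖·‖ ≤ R
  obtain ⟨z, hz, hzmin⟩ := (isCompact_sphere (0 : E) 1).exists_isMinOn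
    (NormedSpace.sphere_nonempty.mpr zero_le_one) hcont.continuousOn
  have hz1 : ‖z‖ = 1 := by simpa using hz
  have hcpos : 0 < R z := hRpos z (by intro h; rw [h] at hz1; simp at hz1)
  set c := R z with hc
  have hlb : ∀ x : E, c * ‖x‖ ≤ R x := by
    intro x
    rcases eq_or_ne x 0 with rfl | hx
    · simp [hR0]
    · have hxn : (0 : ℝ) < ‖x‖ := norm_pos_iff.mpr hx
      have hmem : (‖x‖⁻¹ • x) ∈ Metric.sphere (0 : E) 1 := by
        simp [norm_smul, abs_of_pos (inv_pos.mpr hxn), inv_mul_cancel₀ hxn.ne']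
      have h2 : c ≤ ‖x‖⁻¹ * R x := by
        have h : R z ≤ R (‖x‖⁻¹ • x) := hzmin hmem
        rwa [hhom, abs_of_pos (inv_pos.mpr hxn)] at h
      calc c * ‖x‖ ≤ (‖x‖⁻¹ * R x) * ‖x‖ := mul_le_mul_of_nonneg_right h2 hxn.le
        _ = R x := by field_simp
  -- basic facts about the dual-norm sets
  have hSbdd : ∀ v : E, BddAbove {r : ℝ | ∃ u : E, R u ≤ 1 ∧ r = ⟪u, v⟫} := by
    intro v
    refine ⟨‖v‖ / c, ?_⟩
    rintro r ⟨u, hu, rfl⟩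
    have h1 : ⟪u, v⟫ ≤ ‖u‖ * ‖v‖ := real_inner_le_norm u v
    have h2 : ‖u‖ ≤ 1 / c := by
      rw [le_div_iff₀ hcpos]
      have := hlb u
      nlinarith
    have := mul_le_mul_of_nonneg_right h2 (norm_nonneg v)
    calc ⟪u, v⟫ ≤ ‖u‖ * ‖v‖ := h1
      _ ≤ (1 / c) * ‖v‖ := this
      _ = ‖v‖ / c := by ring
  have hSne : ∀ v : E, ((0 : ℝ) ∈ {r : ℝ | ∃ u : E, R u ≤ 1 ∧ r = ⟪u, v⟫}) :=
    fun v => ⟨0, by simp [hR0], by simp⟩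
  have hRsnn : ∀ v : E, 0 ≤ Rstar v := fun v => by
    rw [hRstar]; exact le_csSup (hSbdd v) (hSne v)
  have hdual : ∀ u v : E, ⟪u, v⟫ ≤ R u * Rstar v := by
    intro u v
    rcases eq_or_ne u 0 with rfl | hu
    · simp [hR0]
    · have hRu := hRpos u hu
      have h1 : R ((R u)⁻¹ • u) ≤ 1 := by
        rw [hhom, abs_of_pos (inv_pos.mpr hRu), inv_mul_cancel₀ hRu.ne']
      have h2 : ⟪(R u)⁻¹ • u, v⟫ ≤ Rstar v := by
        rw [hRstar]; exact le_csSup (hSbdd v) ⟨_, h1, rfl⟩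
      rw [real_inner_smul_left] at h2
      have h3 := mul_le_mul_of_nonneg_left h2 hRu.le
      calc ⟪u, v⟫ = R u * ((R u)⁻¹ * ⟪u, v⟫) := by field_simp
        _ ≤ R u * Rstar v := h3
  have hRsneg : ∀ v : E, Rstar (-v) = Rstar v := by
    intro v
    rw [hRstar, hRstar]
    congr 1
    ext r
    constructor
    · rintro ⟨u, hu, rfl⟩
      exact ⟨-u, by rwa [hRneg], by simp⟩
    · rintro ⟨u, hu, rfl⟩
      exact ⟨-u, by rwa [hRneg], by simp⟩
  have hRsadd : ∀ v w : E, Rstar (v + w) ≤ Rstar v + Rstar w := by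
    intro v w
    rw [hRstar (v + w)]
    refine csSup_le ⟨0, hSne _⟩ ?_
    rintro r ⟨u, hu, rfl⟩
    have h1 : ⟪u, v⟫ ≤ Rstar v := by
      rw [hRstar]; exact le_csSup (hSbdd v) ⟨u, hu, rfl⟩
    have h2 : ⟪u, w⟫ ≤ Rstar w := by
      rw [hRstar]; exact le_csSup (hSbdd w) ⟨u, hu, rfl⟩
    rw [inner_add_right]
    linarith
  -- (i)
  have hi : Rstar (θhat - θstar) ≤ 2 * lam := by
    have h1 : θhat - θstar = (θhat - θn) + (θn - θstar) := by abel
    rw [h1]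
    calc Rstar ((θhat - θn) + (θn - θstar))
        ≤ Rstar (θhat - θn) + Rstar (θn - θstar) := hRsadd _ _
      _ ≤ lam + lam := add_le_add hfeas hlam2
      _ = 2 * lam := by ring
  -- Ψ facts
  have hPbdd : BddAbove {r : ℝ | ∃ u : E, u ∈ M ∧ u ≠ 0 ∧ r = R u / ‖u‖} := by
    refine ⟨C, ?_⟩
    rintro r ⟨u, _, hu, rfl⟩
    rw [div_le_iff₀ (norm_pos_iff.mpr hu)]
    exact hCub u
  have hΨle : ∀ u ∈ M, R u ≤ Ψ * ‖u‖ := by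
    intro u huM
    rcases eq_or_ne u 0 with rfl | hu
    · simp [hR0]
    · have h : R u / ‖u‖ ≤ Ψ := by
        rw [hΨ]; exact le_csSup hPbdd ⟨u, huM, hu, rfl⟩
      rw [div_le_iff₀ (norm_pos_iff.mpr hu)] at h
      linarith
  have hΨnn : 0 ≤ Ψ := by
    have h : R x₀ / ‖x₀‖ ≤ Ψ := by
      rw [hΨ]; exact le_csSup hPbdd ⟨x₀, hx₀M, hx₀, rfl⟩
    have : 0 ≤ R x₀ / ‖x₀‖ := div_nonneg (hnonneg _) (norm_nonneg _)
    linarith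
  -- decomposition of the error
  set Δ := θhat - θstar with hΔ
  set u := (M.orthogonalProjectionOnto Δ : E) with hu
  have huM : u ∈ M := SetLike.coe_mem _
  set v := Δ - u with hv
  have hvM : v ∈ Mᗮ := Submodule.sub_starProjection_mem_orthogonal (K := M) Δ
  have hfeas' : Rstar (θstar - θn) ≤ lam := by
    have h : θstar - θn = -(θn - θstar) := by abel
    rw [h, hRsneg]; exact hlam2
  have hRθ : R θhat ≤ R θstar := hmin θstar hfeas'
  have hsplit : R θhat = R (θstar + u) + R v := by
    have h : θhat = (θstar + u) + v := by rw [hv, hΔ]; abel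
    rw [h]; exact hdecomp _ (M.add_mem hθstar huM) _ hvM
  have htheta : R θstar ≤ R (θstar + u) + R u := by
    have h := hadd (θstar + u) (-u)
    rw [hRneg] at h
    simpa using h
  have hvu : R v ≤ R u := by linarith
  have hΔuv : Δ = u + v := by rw [hv]; abel
  have hRΔ : R Δ ≤ 2 * R u := by
    calc R Δ = R (u + v) := by rw [← hΔuv]
      _ ≤ R u + R v := hadd u v
      _ ≤ 2 * R u := by linarith
  have hinner : ⟪u, v⟫ = 0 := (Submodule.mem_orthogonal M v).mp hvM u huM
  have hnorm2 : ‖Δ‖ ^ 2 = ‖u‖ ^ 2 + ‖v‖ ^ 2 := by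
    rw [hΔuv, norm_add_sq_real, hinner]; ring
  have hunorm : ‖u‖ ≤ ‖Δ‖ := by
    nlinarith [norm_nonneg u, norm_nonneg Δ, sq_nonneg (‖v‖)]
  -- (ii)
  have hΔsq : ‖Δ‖ ^ 2 ≤ (2 * R u) * (2 * lam) := by
    have h1 : ⟪Δ, Δ⟫ = ‖Δ‖ ^ 2 := real_inner_self_eq_norm_sq Δ
    have h2 := hdual Δ Δ
    have h3 : R Δ * Rstar Δ ≤ (2 * R u) * (2 * lam) :=
      mul_le_mul hRΔ hi (hRsnn Δ) (by linarith [hnonneg u])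
    linarith
  have hΨu : R u ≤ Ψ * ‖u‖ := hΨle u huM
  have hii : ‖Δ‖ ≤ 4 * lam * Ψ := by
    have h5 : ‖Δ‖ ^ 2 ≤ 4 * lam * Ψ * ‖Δ‖ := by
      calc ‖Δ‖ ^ 2 ≤ (2 * R u) * (2 * lam) := hΔsq
        _ = (4 * lam) * R u := by ring
        _ ≤ (4 * lam) * (Ψ * ‖u‖) := mul_le_mul_of_nonneg_left hΨu (by linarith)
        _ ≤ (4 * lam) * (Ψ * ‖Δ‖) :=
            mul_le_mul_of_nonneg_left (mul_le_mul_of_nonneg_left hunorm hΨnn) (by linarith)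
        _ = 4 * lam * Ψ * ‖Δ‖ := by ring
    rcases eq_or_ne Δ 0 with h | h
    · rw [h]; simpa using mul_nonneg (mul_nonneg (by norm_num) hlam.le) hΨnn
    · have hpos : 0 < ‖Δ‖ := norm_pos_iff.mpr h
      have hmul : ‖Δ‖ * ‖Δ‖ ≤ (4 * lam * Ψ) * ‖Δ‖ := by rw [← pow_two]; exact h5
      exact le_of_mul_le_mul_right hmul hpos
  -- (iii)
  have hiii : R Δ ≤ 8 * lam * Ψ ^ 2 := by
    calc R Δ ≤ 2 * R u := hRΔ
      _ ≤ 2 * (Ψ * ‖u‖) := by linarith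
      _ ≤ 2 * (Ψ * ‖Δ‖) := by
          have := mul_le_mul_of_nonneg_left hunorm hΨnn
          linarith
      _ ≤ 2 * (Ψ * (4 * lam * Ψ)) := by
          have := mul_le_mul_of_nonneg_left hii hΨnn
          linarith
      _ = 8 * lam * Ψ ^ 2 := by ring
  exact ⟨hi, hii, hiii⟩
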